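/- Let A be a self-adjoint linear map on ℝⁿ, and let x, y be points with Ax·x = 1, Ay·y = 1, x ≠ y. If u is a unit vector collinear with y − x (pointing from x to y), then Ax·u = −Ay·u. In particular, if v is the reflection of u at y in the hyperplane orthogonal to the normal Ay (i.e., v = u − 2(u·n)n with n the unit vector along Ay), then Ax·u = Ay·v; that is, the Joachimsthal quantity Ax·u is invariant under the billiard map in the ellipsoid Ax·x = 1. -/

import Mathlib

open scoped RealInnerProductSpace

theorem joachimsthal_billiard_invariant (n : ℕ)
    (A : EuclideanSpace ℝ (Fin n) →ₗ[ℝ] EuclideanSpace ℝ (Fin n))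
    (hA : ∀ u v, ⟪A u, v⟫ = ⟪u, A v⟫)
    (x y : EuclideanSpace ℝ (Fin n))
    (hx : ⟪A x, x⟫ = 1) (hy : ⟪A y, y⟫ = 1) (hxy : x ≠ y)
    (u : EuclideanSpace ℝ (Fin n))
    (hu : u = ‖y - x‖⁻¹ • (y - x)) :
    ⟪A x, u⟫ = - ⟪A y, u⟫ ∧
    (A y ≠ 0 →
      ∀ nv v : EuclideanSpace ℝ (Fin n),
        nv = ‖A y‖⁻¹ • A y →
        v = u - (2 * ⟪u, nv⟫) • nv →
        ⟪A x, u⟫ = ⟪A y, v⟫) := by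
  have hkey : ⟪A x, y - x⟫ + ⟪A y, y - x⟫ = 0 := by
    have h1 : ⟪A x, y⟫ = ⟪A y, x⟫ := by
      rw [hA, real_inner_comm]
    simp [inner_sub_right, hx, hy, h1]
  have h1 : ⟪A x, u⟫ = - ⟪A y, u⟫ := by
    subst hu
    rw [real_inner_smul_right, real_inner_smul_right]
    linear_combination (‖y - x‖⁻¹) * hkey
  refine ⟨h1, fun hAy nv v hnv hv => ?_⟩
  subst hnv hv
  have hn : ‖A y‖ ≠ 0 := norm_ne_zero_iff.mpr hAy
  have h2 : ⟪A y, ‖A y‖⁻¹ • A y⟫ = ‖A y‖ := by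
    rw [real_inner_smul_right, real_inner_self_eq_norm_sq]
    field_simp
  have h3 : ⟪u, ‖A y‖⁻¹ • A y⟫ = ‖A y‖⁻¹ * ⟪A y, u⟫ := by
    rw [real_inner_smul_right, real_inner_comm]
  rw [inner_sub_right, real_inner_smul_right, h2, h3, h1]
  field_simp
  ring
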